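/- Let h: ℝⁿ → (−∞, +∞] be proper, convex, lower-semicontinuous with minimum value 0 attained on S ≠ ∅. Suppose there exist τ > 0 and ρ ∈ (0,1] such that dist(x, S) ≤ τ·h(x)^ρ for all x. Then for all x with 0 < h(x) < ∞, one has h(x)^{1−ρ} ≤ (τ/ρ)·dist(0, ∂h(x)). -/

import Mathlib

/-- For a proper convex lower-semicontinuous `h : ℝⁿ → (−∞, +∞]` with
minimum value 0 attained on `S ≠ ∅`, a Hölderian error bound
`dist(x, S) ≤ τ·h(x)^ρ` (with `τ > 0`, `ρ ∈ (0,1]`) implies the KL inequality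
`h(x)^{1−ρ} ≤ (τ/ρ)·‖g‖` for every subgradient `g ∈ ∂h(x)`, at every point with
`0 < h(x) < ∞`. -/
theorem error_bound_implies_KL
    (n : ℕ) (h : EuclideanSpace ℝ (Fin n) → EReal)
    (hproper : ∃ x, h x ≠ ⊤)
    (hnotbot : ∀ x, h x ≠ ⊥)
    (hlsc : LowerSemicontinuous h)
    (hconvex : ∀ (x y : EuclideanSpace ℝ (Fin n)) (a c : ℝ), 0 ≤ a → 0 ≤ c → a + c = 1 →
      h (a • x + c • y) ≤ (a : EReal) * h x + (c : EReal) * h y)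
    (S : Set (EuclideanSpace ℝ (Fin n)))
    (hS : S = {x | h x = 0})
    (hSne : S.Nonempty)
    (hmin : ∀ x, 0 ≤ h x)
    (τ ρ : ℝ) (hτ : 0 < τ) (hρ0 : 0 < ρ) (hρ1 : ρ ≤ 1)
    (hEB : ∀ x, h x ≠ ⊤ → Metric.infDist x S ≤ τ * (h x).toReal ^ ρ) :
    ∀ x, 0 < h x → h x ≠ ⊤ →
      ∀ g : EuclideanSpace ℝ (Fin n),
        (∀ y, h x + ((inner ℝ g (y - x) : ℝ) : EReal) ≤ h y) →
        (h x).toReal ^ (1 - ρ) ≤ (τ / ρ) * ‖g‖ := by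
  intro x hx0 hxtop g hg
  set t := (h x).toReal with ht
  have hxr : h x = (t : EReal) := (EReal.coe_toReal hxtop (hnotbot x)).symm
  have ht0 : 0 < t := by
    have := hx0
    rw [hxr] at this
    exact_mod_cast this
  have key : ∀ y ∈ S, t ≤ ‖g‖ * dist x y := by
    intro y hy
    have hy0 : h y = 0 := by rw [hS] at hy; exact hy
    have h1 := hg y
    rw [hy0, hxr] at h1
    have h2 : t + (inner ℝ g (y - x) : ℝ) ≤ 0 := by exact_mod_cast h1
    have h3 : t ≤ (inner ℝ g (x - y) : ℝ) := by
      have hxy : x - y = -(y - x) := (neg_sub y x).symm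
      rw [hxy, inner_neg_right]
      linarith
    calc t ≤ (inner ℝ g (x - y) : ℝ) := h3
      _ ≤ ‖g‖ * ‖x - y‖ := real_inner_le_norm g (x - y)
      _ = ‖g‖ * dist x y := by rw [dist_eq_norm]
  have hgpos : 0 < ‖g‖ := by
    obtain ⟨y, hy⟩ := hSne
    rcases lt_or_eq_of_le (norm_nonneg g) with hp | hz
    · exact hp
    · exfalso
      have := key y hy
      rw [← hz, zero_mul] at this
      linarith
  have hinf : t / ‖g‖ ≤ Metric.infDist x S := by
    by_contra hc
    push_neg at hc
    obtain ⟨y, hy, hd⟩ := (Metric.infDist_lt_iff hSne).1 hc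
    have := key y hy
    rw [lt_div_iff₀ hgpos] at hd
    nlinarith
  have hchain : t ≤ τ * ‖g‖ * t ^ ρ := by
    have := le_trans hinf (hEB x hxtop)
    rw [div_le_iff₀ hgpos] at this
    calc t ≤ τ * t ^ ρ * ‖g‖ := this
      _ = τ * ‖g‖ * t ^ ρ := by ring
  have htρ : (0:ℝ) < t ^ ρ := Real.rpow_pos_of_pos ht0 ρ
  have hmain : t ^ (1 - ρ) ≤ τ * ‖g‖ := by
    rw [Real.rpow_sub ht0, Real.rpow_one, div_le_iff₀ htρ]
    exact hchain
  have hτρ : τ * ‖g‖ ≤ (τ / ρ) * ‖g‖ := by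
    apply mul_le_mul_of_nonneg_right _ (norm_nonneg g)
    rw [le_div_iff₀ hρ0]
    nlinarith
  exact le_trans hmain hτρ
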